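/- Let X be a complete CAT(0) space and let Y ⊆ X be a nonempty bounded subset. Define the circumradius ρ(Y) := inf{ r > 0 : Y ⊆ Ball_r(x) for some x ∈ X }, where Ball_r(x) denotes the closed ball of radius r about x. Then there exists a unique point c_Y ∈ X such that Y ⊆ Ball_{ρ(Y)}(c_Y). -/

import Mathlib

/-- `m` is a midpoint of `x` and `y`: it lies at distance `dist x y / 2` from both. -/
def IsMidpoint {X : Type*} [MetricSpace X] (x y m : X) : Prop :=
  dist x m = dist x y / 2 ∧ dist y m = dist x y / 2

/-- A CAT(0) space, via the Bruhat–Tits (CN inequality) characterization: every pair of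
points has a midpoint satisfying the CN inequality. -/
class CAT0Space (X : Type*) [MetricSpace X] : Prop where
  cn : ∀ x y : X, ∃ m : X, IsMidpoint x y m ∧
    ∀ z : X, dist z m ^ 2 ≤ dist z x ^ 2 / 2 + dist z y ^ 2 / 2 - dist x y ^ 2 / 4

/-- The circumradius of a subset `Y`: the infimum of radii `r > 0` such that `Y` is
contained in the closed ball of radius `r` about some point of `X`. -/
noncomputable def circumradius {X : Type*} [MetricSpace X] (Y : Set X) : ℝ :=
  sInf {r : ℝ | 0 < r ∧ ∃ x : X, Y ⊆ Metric.closedBall x r}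

/-- Auxiliary: the supremum of distances from `x` to points of `Y`. -/
noncomputable def supDist {X : Type*} [MetricSpace X] (Y : Set X) (x : X) : ℝ :=
  sSup ((dist x) '' Y)

/-- In a complete CAT(0) space, every nonempty bounded subset `Y` has a unique
circumcenter: a point `c` with `Y ⊆ Ball_{ρ(Y)}(c)`. -/
theorem circumcenter_existsUnique {X : Type*} [MetricSpace X] [CompleteSpace X] [CAT0Space X]
    {Y : Set X} (hne : Y.Nonempty) (hbd : Bornology.IsBounded Y) :
    ∃! c : X, Y ⊆ Metric.closedBall c (circumradius Y) := by
  set S : Set ℝ := {r : ℝ | 0 < r ∧ ∃ x : X, Y ⊆ Metric.closedBall x r} with hS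
  set ρ := circumradius Y with hρdef
  obtain ⟨y₀, hy₀⟩ := hne
  -- basic facts about supDist
  have hba : ∀ x : X, BddAbove ((dist x) '' Y) := by
    intro x
    obtain ⟨r, hr⟩ := hbd.subset_closedBall x
    exact ⟨r, by rintro _ ⟨y, hy, rfl⟩; simpa [dist_comm] using hr hy⟩
  have hne' : ∀ x : X, ((dist x) '' Y).Nonempty := fun x => ⟨_, ⟨y₀, hy₀, rfl⟩⟩
  have hle : ∀ x : X, ∀ y ∈ Y, dist x y ≤ supDist Y x := by
    intro x y hy; exact le_csSup (hba x) ⟨y, hy, rfl⟩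
  have hsup_le : ∀ x : X, ∀ r : ℝ, (∀ y ∈ Y, dist x y ≤ r) → supDist Y x ≤ r := by
    intro x r h; exact csSup_le (hne' x) (by rintro _ ⟨y, hy, rfl⟩; exact h y hy)
  have hf0 : ∀ x : X, 0 ≤ supDist Y x := fun x => le_trans dist_nonneg (hle x y₀ hy₀)
  have hball : ∀ x : X, ∀ r : ℝ, Y ⊆ Metric.closedBall x r ↔ supDist Y x ≤ r := by
    intro x r
    constructor
    · intro h; exact hsup_le x r fun y hy => by simpa [dist_comm] using h hy
    · intro h y hy; simpa [dist_comm] using le_trans (hle x y hy) h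
  -- facts about ρ
  have hSne : S.Nonempty := by
    obtain ⟨r, hr⟩ := hbd.subset_closedBall y₀
    refine ⟨max r 1, lt_of_lt_of_le one_pos (le_max_right _ _), y₀, ?_⟩
    exact hr.trans (Metric.closedBall_subset_closedBall (le_max_left _ _))
  have hSbdd : BddBelow S := ⟨0, fun r hr => le_of_lt hr.1⟩
  have hρ0 : 0 ≤ ρ := Real.sInf_nonneg fun r hr => le_of_lt hr.1
  have hρ_le : ∀ x : X, ρ ≤ supDist Y x := by
    intro x
    refine le_of_forall_pos_le_add fun ε hε => ?_
    refine csInf_le hSbdd ⟨lt_of_lt_of_le hε (by linarith [hf0 x]), x, ?_⟩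
    exact (hball x _).2 (by linarith)
  -- CN inequality for supDist
  have hCN : ∀ x₁ x₂ : X, ∃ m : X, supDist Y m ^ 2 ≤
      supDist Y x₁ ^ 2 / 2 + supDist Y x₂ ^ 2 / 2 - dist x₁ x₂ ^ 2 / 4 := by
    intro x₁ x₂
    obtain ⟨m, _, hm⟩ := CAT0Space.cn x₁ x₂
    refine ⟨m, ?_⟩
    have hEb : ∀ y ∈ Y, dist m y ^ 2 ≤
        supDist Y x₁ ^ 2 / 2 + supDist Y x₂ ^ 2 / 2 - dist x₁ x₂ ^ 2 / 4 := by
      intro y hy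
      have h1 := hm y
      have h2 := hle x₁ y hy
      have h3 := hle x₂ y hy
      rw [dist_comm y x₁, dist_comm y x₂, dist_comm y m] at h1
      nlinarith [mul_nonneg (sub_nonneg.2 h2) (add_nonneg (hf0 x₁) (dist_nonneg (x := x₁) (y := y))),
        mul_nonneg (sub_nonneg.2 h3) (add_nonneg (hf0 x₂) (dist_nonneg (x := x₂) (y := y)))]
    have hE0 : 0 ≤ supDist Y x₁ ^ 2 / 2 + supDist Y x₂ ^ 2 / 2 - dist x₁ x₂ ^ 2 / 4 :=
      le_trans (sq_nonneg _) (hEb y₀ hy₀)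
    have hsm : supDist Y m ≤
        Real.sqrt (supDist Y x₁ ^ 2 / 2 + supDist Y x₂ ^ 2 / 2 - dist x₁ x₂ ^ 2 / 4) := by
      refine hsup_le m _ fun y hy => ?_
      exact (Real.le_sqrt dist_nonneg hE0).2 (hEb y hy)
    calc supDist Y m ^ 2
        ≤ Real.sqrt (supDist Y x₁ ^ 2 / 2 + supDist Y x₂ ^ 2 / 2 - dist x₁ x₂ ^ 2 / 4) ^ 2 :=
          pow_le_pow_left₀ (hf0 m) hsm 2
      _ = _ := Real.sq_sqrt hE0
  -- minimizing sequence
  have hseq : ∀ n : ℕ, ∃ x : X, supDist Y x ≤ ρ + 1 / (n + 1) := by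
    intro n
    have hpos : (0:ℝ) < 1 / (n + 1) := by positivity
    have hSρ : sInf S = ρ := rfl
    obtain ⟨r, hrS, hr⟩ := exists_lt_of_csInf_lt hSne (show sInf S < ρ + 1 / (n+1) by
      rw [hSρ]; linarith)
    obtain ⟨_, x, hx⟩ := hrS
    exact ⟨x, le_trans ((hball x r).1 hx) (le_of_lt hr)⟩
  choose u hu using hseq
  have huf0 : ∀ n : ℕ, 0 ≤ (1:ℝ) / (n + 1) := fun n => by positivity
  -- distance bound between sequence elements
  have hdistsq : ∀ n k N : ℕ, N ≤ n → N ≤ k →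
      dist (u n) (u k) ^ 2 ≤ (8 * ρ + 4) * (1 / (N + 1)) := by
    intro n k N hn hk
    obtain ⟨m, hm⟩ := hCN (u n) (u k)
    have hρm := hρ_le m
    have hεn : (1:ℝ) / (n + 1) ≤ 1 / (N + 1) := by
      apply one_div_le_one_div_of_le (by positivity)
      have : (N:ℝ) ≤ n := Nat.cast_le.2 hn
      linarith
    have hεk : (1:ℝ) / (k + 1) ≤ 1 / (N + 1) := by
      apply one_div_le_one_div_of_le (by positivity)
      have : (N:ℝ) ≤ k := Nat.cast_le.2 hk
      linarith
    have hε1 : (1:ℝ) / (N + 1) ≤ 1 := by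
      rw [div_le_one (by positivity)]; linarith [Nat.cast_nonneg (α := ℝ) N]
    have h1 := hu n
    have h2 := hu k
    have hn0 := hf0 (u n)
    have hk0 := hf0 (u k)
    nlinarith [huf0 n, huf0 k, huf0 N, sq_nonneg (supDist Y m - ρ)]
  have hcauchy : CauchySeq u := by
    refine cauchySeq_of_le_tendsto_0 (fun N => Real.sqrt ((8 * ρ + 4) * (1 / (N + 1)))) ?_ ?_
    · intro n k N hn hk
      have hnn : (0:ℝ) ≤ (8 * ρ + 4) * (1 / (N + 1)) :=
        mul_nonneg (by linarith) (huf0 N)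
      exact (Real.le_sqrt dist_nonneg hnn).2 (hdistsq n k N hn hk)
    · have h1 : Filter.Tendsto (fun N : ℕ => (8 * ρ + 4) * (1 / ((N:ℝ) + 1)))
          Filter.atTop (nhds 0) := by
        have := tendsto_one_div_add_atTop_nhds_zero_nat.const_mul (8 * ρ + 4)
        simpa using this
      have := (Real.continuous_sqrt.tendsto 0).comp h1
      simpa [Function.comp_def] using this
  obtain ⟨c, hc⟩ := cauchySeq_tendsto_of_complete hcauchy
  -- Lipschitz property of supDist
  have hlip : ∀ a b : X, supDist Y a ≤ supDist Y b + dist a b := by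
    intro a b
    refine hsup_le a _ fun y hy => ?_
    calc dist a y ≤ dist a b + dist b y := dist_triangle _ _ _
      _ ≤ dist a b + supDist Y b := by linarith [hle b y hy]
      _ = supDist Y b + dist a b := by ring
  have hfc : supDist Y c ≤ ρ := by
    have htend : Filter.Tendsto (fun n : ℕ => ρ + 1 / ((n:ℝ) + 1) + dist c (u n))
        Filter.atTop (nhds ρ) := by
      have hd : Filter.Tendsto (fun n : ℕ => dist c (u n)) Filter.atTop (nhds 0) := by
        have : Filter.Tendsto (fun n : ℕ => dist c (u n)) Filter.atTop (nhds (dist c c)) :=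
          Filter.Tendsto.dist tendsto_const_nhds hc
        simpa using this
      have := (tendsto_const_nhds (x := ρ)).add
        tendsto_one_div_add_atTop_nhds_zero_nat |>.add hd
      simpa using this
    refine ge_of_tendsto' htend fun n => ?_
    calc supDist Y c ≤ supDist Y (u n) + dist c (u n) := hlip c (u n)
      _ ≤ ρ + 1 / (n + 1) + dist c (u n) := by linarith [hu n]
  refine ⟨c, (hball c ρ).2 hfc, ?_⟩
  intro c' hc'
  have hfc' : supDist Y c' ≤ ρ := (hball c' ρ).1 hc'
  obtain ⟨m, hm⟩ := hCN c' c
  have hρm := hρ_le m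
  have hd : dist c' c = 0 := by
    nlinarith [dist_nonneg (x := c') (y := c), hf0 c, hf0 c', hρ0,
      mul_nonneg (sub_nonneg.2 hρm) (by linarith [hf0 m] : (0:ℝ) ≤ supDist Y m + ρ),
      mul_nonneg (sub_nonneg.2 hfc) (by linarith [hf0 c] : (0:ℝ) ≤ ρ + supDist Y c),
      mul_nonneg (sub_nonneg.2 hfc') (by linarith [hf0 c'] : (0:ℝ) ≤ ρ + supDist Y c')]
  exact dist_eq_zero.1 hd
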